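/- Let G be a finite group, H a subgroup of G of index n ≥ 2, F a field of characteristic p > 0, and W a finite-dimensional F-vector space carrying a linear representation of G. Suppose V is an H-invariant subspace of W of dimension a such that W is the internal direct sum of the translates g·V as g ranges over a right transversal of H in G (so that W is isomorphic to the G-module induced from the H-module V). Let T be a soluble subgroup of G, and let t₁, …, t_m denote the lengths of the orbits of T on the set of right cosets of H in G. Then every G-invariant subspace S of W satisfies d_G(S) ≤ a·Σᵢ₌₁^m (tᵢ)_p, where (t)_p denotes the p-part of the positive integer t. -/

import Mathlib

/-- The smallest `H`-invariant `F`-subspace of `W` containing the set `X`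
(i.e. the `F[H]`-submodule of `W` generated by `X`). -/
def invariantSpan (H : Type*) [Group H] (F : Type*) {W : Type*} [Field F] [AddCommGroup W]
    [Module F W] [DistribMulAction H W] (X : Set W) : Submodule F W :=
  sInf {q : Submodule F W | X ⊆ q ∧ ∀ (h : H), ∀ w ∈ q, h • w ∈ q}


open Subgroup

universe u

theorem exists_abelian_normal_ne_bot (G : Type u) [Group G] [hs : Group.IsSolvable G] [Nontrivial G] :
    ∃ N : Subgroup G, N.Normal ∧ N ≠ ⊥ ∧ ∀ x ∈ N, ∀ y ∈ N, x * y = y * x := by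
  classical
  obtain ⟨k, hk⟩ := (isSolvable_def G).mp hs
  have hex : ∃ k, derivedSeries G k = ⊥ := ⟨k, hk⟩
  set n := Nat.find hex with hn
  have hnbot : derivedSeries G n = ⊥ := Nat.find_spec hex
  have hn0 : n ≠ 0 := by
    intro h
    rw [h, derivedSeries_zero] at hnbot
    exact top_ne_bot hnbot
  refine ⟨derivedSeries G (n - 1), derivedSeries_normal G _, ?_, ?_⟩
  · exact Nat.find_min hex (by omega)
  · have hcomm : ⁅derivedSeries G (n-1), derivedSeries G (n-1)⁆ = ⊥ := by
      rw [← derivedSeries_succ]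
      have : n - 1 + 1 = n := by omega
      rw [this]; exact hnbot
    intro x hx y hy
    have := commutator_eq_bot_iff_le_centralizer.mp hcomm hx
    exact (Subgroup.mem_centralizer_iff.mp this y hy).symm

theorem hall_aux (p : ℕ) (hp : p.Prime) :
    ∀ n : ℕ, ∀ (G : Type u) [Group G] [Finite G], Group.IsSolvable G → Nat.card G ≤ n →
    ∃ Q : Subgroup G, Nat.card Q = ordCompl[p] (Nat.card G) := by
  intro n
  induction n with
  | zero =>
    intro G _ _ _ hle
    exact absurd (Nat.card_pos (α := G)) (by omega)
  | succ n ih =>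
    intro G _ _ hsol hle
    rcases subsingleton_or_nontrivial G with hss | hnt
    · refine ⟨⊥, ?_⟩
      have h1 : Nat.card G = 1 := Nat.card_unique
      simp [h1, Subgroup.card_bot]
    obtain ⟨N, hNnorm, hNbot, hNcomm⟩ := exists_abelian_normal_ne_bot G
    haveI := hNnorm
    -- the p'-torsion part of N
    set K : Subgroup G :=
      { carrier := {x : G | x ∈ N ∧ ¬ p ∣ orderOf x}
        one_mem' := ⟨N.one_mem, by simp [Nat.Prime.one_lt hp, Nat.dvd_one,
          (Nat.Prime.ne_one hp)]⟩
        mul_mem' := by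
          rintro x y ⟨hxN, hxo⟩ ⟨hyN, hyo⟩
          refine ⟨N.mul_mem hxN hyN, fun hdvd => ?_⟩
          have hcomm : Commute x y := hNcomm x hxN y hyN
          have := hdvd.trans hcomm.orderOf_mul_dvd_lcm
          rcases (Nat.Prime.dvd_mul hp).mp (this.trans (Nat.lcm_dvd_mul _ _)) with h | h
          exacts [hxo h, hyo h]
        inv_mem' := by
          rintro x ⟨hxN, hxo⟩
          exact ⟨N.inv_mem hxN, by simpa using hxo⟩ } with hKdef
    have hKmem : ∀ x : G, x ∈ K ↔ x ∈ N ∧ ¬ p ∣ orderOf x := fun x => Iff.rfl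
    haveI hKnorm : K.Normal := by
      constructor
      intro x hx g
      rw [hKmem] at hx ⊢
      refine ⟨hNnorm.conj_mem x hx.1 g, ?_⟩
      have : SemiconjBy g x (g * x * g⁻¹) := by
        unfold SemiconjBy; group
      rw [← this.orderOf_eq g]
      exact hx.2
    have hKcoprime : ¬ p ∣ Nat.card K := by
      intro hdvd
      haveI : Fact p.Prime := ⟨hp⟩
      obtain ⟨x, hx⟩ := exists_prime_orderOf_dvd_card' (G := K) p hdvd
      have : orderOf (x : G) = p := by
        show orderOf (K.subtype x) = p
        rw [orderOf_injective K.subtype K.subtype_injective x]; exact hx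
      exact ((hKmem x).mp x.2).2 (this ▸ dvd_rfl)
    by_cases hKbot : K = ⊥
    · -- N is a p-group
      have hNp : ∀ q : ℕ, q.Prime → q ∣ Nat.card N → q = p := by
        intro q hq hqd
        by_contra hqp
        haveI : Fact q.Prime := ⟨hq⟩
        obtain ⟨x, hx⟩ := exists_prime_orderOf_dvd_card' (G := N) q hqd
        have hxG : orderOf (x : G) = q := by
          show orderOf (N.subtype x) = q
          rw [orderOf_injective N.subtype N.subtype_injective x]; exact hx
        have hxK : (x : G) ∈ K := by
          rw [hKmem]
          exact ⟨x.2, by rw [hxG]; exact fun h => hqp ((Nat.prime_dvd_prime_iff_eq hp hq).mp h).symm⟩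
        rw [hKbot, Subgroup.mem_bot] at hxK
        have : orderOf (x : G) = 1 := by rw [hxK]; exact orderOf_one
        rw [hxG] at this
        exact hq.ne_one this
      have hcardN1 : Nat.card N ≠ 0 := Nat.card_pos.ne'
      have hNordcompl : ordCompl[p] (Nat.card N) = 1 := by
        by_contra hne
        have h2 : 2 ≤ ordCompl[p] (Nat.card N) :=
          (Nat.two_le_iff _).mpr ⟨(Nat.ordCompl_pos p hcardN1).ne', hne⟩
        obtain ⟨q, hq, hqd⟩ := Nat.exists_prime_and_dvd (n := ordCompl[p] (Nat.card N)) hne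
        have : q = p := hNp q hq (hqd.trans (Nat.ordCompl_dvd _ _))
        exact Nat.not_dvd_ordCompl hp hcardN1 (this ▸ hqd)
      -- induct on G ⧸ N
      have hNlt : 1 < Nat.card N := by
        rcases Nat.lt_or_ge 1 (Nat.card N) with h | h
        · exact h
        · interval_cases h' : Nat.card N
          · omega
          · exact absurd ((Subgroup.card_eq_one).mp h') hNbot
      have hcardQuot : Nat.card (G ⧸ N) * Nat.card N = Nat.card G := by
        rw [← Subgroup.index_eq_card, mul_comm, Subgroup.card_mul_index]
      have hquotle : Nat.card (G ⧸ N) ≤ n := by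
        have hpos : 0 < Nat.card (G ⧸ N) := Nat.card_pos
        nlinarith [hcardQuot, hle]
      obtain ⟨Qbar, hQbar⟩ := ih (G ⧸ N) inferInstance hquotle
      set L : Subgroup G := Qbar.comap (QuotientGroup.mk' N) with hLdef
      have hNL : N ≤ L := by
        intro x hx
        simp only [hLdef, Subgroup.mem_comap]
        have : QuotientGroup.mk' N x = 1 := by
          rw [← QuotientGroup.ker_mk' N] at hx
          exact hx
        rw [this]; exact Qbar.one_mem
      have hLcard : Nat.card L = Nat.card Qbar * Nat.card N := by
        have h1 : Nat.card L * L.index = Nat.card G := Subgroup.card_mul_index L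
        have h2 : L.index = Qbar.index :=
          Subgroup.index_comap_of_surjective _ (QuotientGroup.mk'_surjective N)
        have h3 : Nat.card Qbar * Qbar.index = Nat.card (G ⧸ N) := Subgroup.card_mul_index Qbar
        have h4 : Qbar.index ≠ 0 := Subgroup.index_ne_zero_of_finite
        have h5 : (Nat.card Qbar * Nat.card N) * Qbar.index = Nat.card G := by
          rw [mul_right_comm, h3, hcardQuot]
        rw [h2] at h1
        exact Nat.eq_of_mul_eq_mul_right (Nat.pos_of_ne_zero h4) (h1.trans h5.symm)
      -- Schur-Zassenhaus inside L
      set N' : Subgroup L := N.subgroupOf L with hN'def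
      haveI : N'.Normal := hNnorm.subgroupOf L
      have hN'card : Nat.card N' = Nat.card N :=
        Nat.card_congr (Subgroup.subgroupOfEquivOfLe hNL).toEquiv
      have hN'index : N'.index = Nat.card Qbar := by
        have h1 : Nat.card N' * N'.index = Nat.card L := Subgroup.card_mul_index N'
        rw [hN'card, hLcard, mul_comm (Nat.card Qbar) _] at h1
        exact Nat.eq_of_mul_eq_mul_left (by omega) h1
      have hNppow : Nat.card N = p ^ (Nat.card N).factorization p := by
        conv_lhs => rw [← Nat.ordProj_mul_ordCompl_eq_self (Nat.card N) p]
        rw [hNordcompl, mul_one]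
      have hcop : (Nat.card N').Coprime N'.index := by
        rw [hN'card, hN'index, hQbar, hNppow]
        exact Nat.Coprime.pow_left _ (Nat.coprime_ordCompl hp Nat.card_pos.ne')
      obtain ⟨C, hC⟩ := Subgroup.exists_right_complement'_of_coprime hcop
      refine ⟨C.map L.subtype, ?_⟩
      have hCcard : Nat.card C = Nat.card Qbar := by
        have := hC.card_mul
        rw [hN'card] at this
        have h5 : Nat.card N * Nat.card Qbar = Nat.card L := by rw [hLcard, mul_comm]
        exact Nat.eq_of_mul_eq_mul_left (by omega) (this.trans h5.symm)
      have hmap : Nat.card (C.map L.subtype) = Nat.card C :=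
        (Nat.card_congr (Subgroup.equivMapOfInjective C L.subtype L.subtype_injective).toEquiv).symm
      rw [hmap, hCcard, hQbar]
      -- ordCompl (card G/N) = ordCompl (card G)
      rw [← hcardQuot, Nat.ordCompl_mul, hNordcompl, mul_one]
    · -- K nontrivial : induct on G ⧸ K
      have hKgt : 1 < Nat.card K := by
        rcases Nat.lt_or_ge 1 (Nat.card K) with h | h
        · exact h
        · interval_cases h' : Nat.card K
          · exact absurd (Nat.card_pos (α := K)) (by omega)
          · exact absurd ((Subgroup.card_eq_one).mp h') hKbot
      have hcardQuot : Nat.card (G ⧸ K) * Nat.card K = Nat.card G := by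
        rw [← Subgroup.index_eq_card, mul_comm, Subgroup.card_mul_index]
      have hquotle : Nat.card (G ⧸ K) ≤ n := by
        have hpos : 0 < Nat.card (G ⧸ K) := Nat.card_pos
        nlinarith [hcardQuot, hle]
      obtain ⟨Qbar, hQbar⟩ := ih (G ⧸ K) inferInstance hquotle
      refine ⟨Qbar.comap (QuotientGroup.mk' K), ?_⟩
      set L : Subgroup G := Qbar.comap (QuotientGroup.mk' K) with hLdef
      have hLcard : Nat.card L = Nat.card Qbar * Nat.card K := by
        have h1 : Nat.card L * L.index = Nat.card G := Subgroup.card_mul_index L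
        have h2 : L.index = Qbar.index :=
          Subgroup.index_comap_of_surjective _ (QuotientGroup.mk'_surjective K)
        have h3 : Nat.card Qbar * Qbar.index = Nat.card (G ⧸ K) := Subgroup.card_mul_index Qbar
        have h4 : Qbar.index ≠ 0 := Subgroup.index_ne_zero_of_finite
        have h5 : (Nat.card Qbar * Nat.card K) * Qbar.index = Nat.card G := by
          rw [mul_right_comm, h3, hcardQuot]
        rw [h2] at h1
        exact Nat.eq_of_mul_eq_mul_right (Nat.pos_of_ne_zero h4) (h1.trans h5.symm)
      rw [hLcard, hQbar, ← hcardQuot, Nat.ordCompl_mul]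
      congr 1
      have : (Nat.card K).factorization p = 0 := Nat.factorization_eq_zero_of_not_dvd hKcoprime
      rw [this, pow_zero, Nat.div_one]

/-- Hall p'-subgroup existence in finite soluble groups. -/
theorem exists_hall_p_compl (p : ℕ) (hp : p.Prime) (G : Type u) [Group G] [Finite G]
    [Group.IsSolvable G] : ∃ Q : Subgroup G, Nat.card Q = ordCompl[p] (Nat.card G) :=
  hall_aux p hp (Nat.card G) G inferInstance le_rfl


open MulAction Subgroup

theorem orbit_count_lemma' (p : ℕ) (hp : p.Prime) {G : Type u} [Group G] [Finite G]
    (T : Subgroup G) (hTsol : IsSolvable T) (Ω : Type v) [MulAction G Ω] [Finite Ω] :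
    ∃ Q : Subgroup G, Q ≤ T ∧ ¬ p ∣ Nat.card Q ∧
      Nat.card (orbitRel.Quotient Q Ω) ≤
        ∑ᶠ ω : orbitRel.Quotient T Ω,
          p ^ ((Nat.card (orbitRel.Quotient.orbit ω)).factorization p) := by
  classical
  haveI : Fintype Ω := Fintype.ofFinite Ω
  haveI : Group.IsSolvable T := hTsol
  obtain ⟨Q', hQ'card⟩ := exists_hall_p_compl p hp T
  set QQ : Subgroup G := Q'.map T.subtype with hQQdef
  have hQT : QQ ≤ T := Subgroup.map_subtype_le Q'
  have hcardQ : Nat.card QQ = ordCompl[p] (Nat.card T) := by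
    rw [← hQ'card]
    exact (Nat.card_congr (Subgroup.equivMapOfInjective Q' T.subtype T.subtype_injective).toEquiv).symm
  have hpQ : ¬ p ∣ Nat.card QQ := by
    rw [hcardQ]
    exact Nat.not_dvd_ordCompl hp (Nat.card_pos (α := T)).ne'
  refine ⟨QQ, hQT, hpQ, ?_⟩
  -- pointwise orbit bound
  have hos : ∀ (K : Subgroup G) (x : Ω),
      Nat.card (orbit K x) * Nat.card (stabilizer K x) = Nat.card K := by
    intro K x
    rw [← Nat.card_prod]
    exact Nat.card_congr (orbitProdStabilizerEquivGroup K x)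
  have key : ∀ x : Ω,
      ordCompl[p] (Nat.card (orbit T x)) ≤ Nat.card (orbit QQ x) := by
    intro x
    haveI : Nonempty (orbit QQ x) := ⟨⟨x, MulAction.mem_orbit_self x⟩⟩
    have hQx := hos QQ x
    have hTx := hos T x
    set oQ := Nat.card (orbit QQ x)
    set sQ := Nat.card (stabilizer QQ x)
    set oT := Nat.card (orbit T x)
    set sT := Nat.card (stabilizer T x)
    have hsQT : sQ ∣ sT := by
      have hsub : (stabilizer QQ x).map (Subgroup.inclusion hQT) ≤ stabilizer T x := by
        rintro y ⟨z, hz, rfl⟩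
        have hz' : (z : G) • x = x := hz
        show (Subgroup.inclusion hQT z) • x = x
        show ((Subgroup.inclusion hQT z : T) : G) • x = x
        rwa [Subgroup.coe_inclusion]
      have h2 := Subgroup.card_dvd_of_le hsub
      have h3 : sQ = Nat.card ((stabilizer QQ x).map (Subgroup.inclusion hQT)) :=
        Nat.card_congr (Subgroup.equivMapOfInjective _ _
          (Subgroup.inclusion_injective hQT)).toEquiv
      rw [h3]; exact h2
    have hsQQ : sQ ∣ Nat.card QQ := ⟨oQ, by rw [← hQx, mul_comm]⟩
    have hpsQ : ¬ p ∣ sQ := fun h => hpQ (h.trans hsQQ)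
    have hsQcompl : sQ ∣ ordCompl[p] sT := Nat.dvd_ordCompl_of_dvd_not_dvd hsQT hpsQ
    obtain ⟨u, hu⟩ := hsQcompl
    have hcompl_mul : ordCompl[p] oT * ordCompl[p] sT = ordCompl[p] (Nat.card T) := by
      rw [← Nat.ordCompl_mul, hTx]
    have hoQ : oQ * sQ = ordCompl[p] oT * (sQ * u) := by
      rw [← hu, hcompl_mul, ← hcardQ]; exact hQx
    have hsQpos : 0 < sQ := Nat.card_pos
    have hoQeq : oQ = ordCompl[p] oT * u := by
      have h4 : oQ * sQ = (ordCompl[p] oT * u) * sQ := by rw [hoQ]; ring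
      exact Nat.eq_of_mul_eq_mul_right hsQpos h4
    have hupos : 0 < u := by
      rcases Nat.eq_zero_or_pos u with h | h
      · exfalso
        rw [h, mul_zero] at hoQeq
        exact absurd hoQeq (Nat.card_pos (α := orbit QQ x)).ne'
      · exact h
    rw [hoQeq]
    exact Nat.le_mul_of_pos_right _ hupos
  -- the coarsening map between orbit quotients
  have hQtoT : ∀ x y : Ω, orbitRel QQ Ω x y → orbitRel T Ω x y := by
    intro x y hxy
    rw [MulAction.orbitRel_apply] at hxy ⊢
    obtain ⟨q, rfl⟩ := MulAction.mem_orbit_iff.mp hxy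
    exact MulAction.mem_orbit_iff.mpr ⟨⟨(q : G), hQT q.2⟩, rfl⟩
  set F : orbitRel.Quotient QQ Ω → orbitRel.Quotient T Ω :=
    Quotient.map' id hQtoT with hFdef
  have hFmk : ∀ x : Ω, F (Quotient.mk'' x) = Quotient.mk'' x := fun x => rfl
  haveI : Fintype (orbitRel.Quotient QQ Ω) := Fintype.ofFinite _
  haveI : Fintype (orbitRel.Quotient T Ω) := Fintype.ofFinite _
  -- total count via fibers
  have htot : Nat.card (orbitRel.Quotient QQ Ω)
      = ∑ ω : orbitRel.Quotient T Ω, Nat.card {c : orbitRel.Quotient QQ Ω // F c = ω} := by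
    rw [Nat.card_eq_fintype_card, ← Fintype.card_congr (Equiv.sigmaFiberEquiv F),
      Fintype.card_sigma]
    simp [Nat.card_eq_fintype_card]
  rw [htot, finsum_eq_sum_of_fintype]
  apply Finset.sum_le_sum
  intro ω _
  have htωpos : 0 < Nat.card ω.orbit := by
    haveI := (orbitRel.Quotient.nonempty_orbit ω).to_subtype
    exact Nat.card_pos
  have horbeq : ∀ c : {c : orbitRel.Quotient QQ Ω // F c = ω},
      ordCompl[p] (Nat.card ω.orbit) ≤ Nat.card ((c : orbitRel.Quotient QQ Ω)).orbit := by
    rintro ⟨c, hc⟩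
    revert hc
    induction c using Quotient.inductionOn' with
    | h x =>
      intro hc
      have hx : (Quotient.mk'' x : orbitRel.Quotient T Ω) = ω := by
        rw [← hFmk x]; exact hc
      have h2 : ω.orbit = orbit T x := by rw [← hx]; exact orbitRel.Quotient.orbit_mk x
      have h1 : ((⟨Quotient.mk'' x, hc⟩ : {c : orbitRel.Quotient QQ Ω // F c = ω})
          : orbitRel.Quotient QQ Ω).orbit = orbit QQ x := orbitRel.Quotient.orbit_mk x
      rw [h1, h2]
      exact key x
  have hsum : ∑ c : {c : orbitRel.Quotient QQ Ω // F c = ω},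
      Nat.card ((c : orbitRel.Quotient QQ Ω)).orbit = Nat.card ω.orbit := by
    have e : (Σ c : {c : orbitRel.Quotient QQ Ω // F c = ω},
        ((c : orbitRel.Quotient QQ Ω).orbit : Set Ω)) ≃ (ω.orbit : Set Ω) := by
      refine ⟨fun s => ⟨(s.2 : Ω), ?_⟩, fun y => ⟨⟨Quotient.mk'' (y : Ω), ?_⟩,
        ⟨(y : Ω), ?_⟩⟩, ?_, ?_⟩
      · have h1 : Quotient.mk'' (s.2 : Ω) = (s.1 : orbitRel.Quotient QQ Ω) :=
          orbitRel.Quotient.mem_orbit.mp s.2.2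
        have h2 : F (s.1 : orbitRel.Quotient QQ Ω) = ω := s.1.2
        rw [← h1, hFmk] at h2
        exact orbitRel.Quotient.mem_orbit.mpr h2
      · rw [hFmk]
        exact orbitRel.Quotient.mem_orbit.mp y.2
      · exact orbitRel.Quotient.mem_orbit.mpr rfl
      · rintro ⟨⟨c, hc⟩, ⟨x, hx⟩⟩
        have h1 : Quotient.mk'' x = c := orbitRel.Quotient.mem_orbit.mp hx
        subst h1
        rfl
      · rintro ⟨y, hy⟩
        rfl
    have h5 := Nat.card_congr e
    rw [Nat.card_eq_fintype_card, Fintype.card_sigma, Nat.card_eq_fintype_card] at h5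
    simp only [Nat.card_eq_fintype_card]
    exact h5
  have hle : Nat.card {c : orbitRel.Quotient QQ Ω // F c = ω}
      * ordCompl[p] (Nat.card ω.orbit) ≤ Nat.card ω.orbit := by
    calc Nat.card {c : orbitRel.Quotient QQ Ω // F c = ω} * ordCompl[p] (Nat.card ω.orbit)
        = ∑ _c : {c : orbitRel.Quotient QQ Ω // F c = ω}, ordCompl[p] (Nat.card ω.orbit) := by
          rw [Finset.sum_const, Finset.card_univ, Nat.card_eq_fintype_card, smul_eq_mul]
      _ ≤ ∑ c : {c : orbitRel.Quotient QQ Ω // F c = ω},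
            Nat.card ((c : orbitRel.Quotient QQ Ω)).orbit :=
          Finset.sum_le_sum (fun c _ => horbeq c)
      _ = Nat.card ω.orbit := hsum
  exact Nat.le_of_mul_le_mul_right
    (by rw [Nat.ordProj_mul_ordCompl_eq_self]; exact hle)
    (Nat.ordCompl_pos p htωpos.ne')


section invariantSpanLemmas

variable {H : Type*} [Group H] {F : Type*} {W : Type*} [Field F] [AddCommGroup W]
    [Module F W] [DistribMulAction H W] (X : Set W)

theorem subset_invariantSpan : X ⊆ invariantSpan H F X := by
  intro x hx
  show x ∈ invariantSpan H F X
  rw [invariantSpan, Submodule.mem_sInf]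
  exact fun q hq => hq.1 hx

theorem invariantSpan_le {q : Submodule F W} (hX : X ⊆ q)
    (hq : ∀ (h : H), ∀ w ∈ q, h • w ∈ q) : invariantSpan H F X ≤ q :=
  sInf_le ⟨hX, hq⟩

theorem smul_mem_invariantSpan (h : H) {w : W} (hw : w ∈ invariantSpan H F X) :
    h • w ∈ invariantSpan H F X := by
  rw [invariantSpan, Submodule.mem_sInf] at hw ⊢
  exact fun q hq => hq.2 h w (hw q hq)

end invariantSpanLemmas

/-- Let `G` be a finite group, `H ≤ G` of index `n ≥ 2`, `F` a field of characteristic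
`p > 0`, and `W` an `F`-vector space carrying a linear representation of `G`. Suppose
`V ≤ W` is an `H`-invariant subspace of dimension `a` such that `W` is the internal
direct sum of the translates `t • V` as `t` runs over a transversal `Tr` of `H` in `G`
(so `W ≅ V↑ᴳ`). Let `T` be a soluble subgroup of `G`, and let `t₁, …, t_m` be the
lengths of the orbits of `T` on the cosets of `H` in `G`. Then every `G`-invariant
subspace `S` of `W` satisfies `d_G(S) ≤ a·Σᵢ (tᵢ)_p`, where `(t)_p = p^(t.factorization p)`
is the `p`-part of `t`. -/
theorem dG_submodule_le_sum_p_parts {G : Type*} [Group G] [Finite G]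
    (H : Subgroup G) (n : ℕ) (hn : 2 ≤ n) (hindex : H.index = n)
    (F : Type*) [Field F] (p : ℕ) (hp : p.Prime) [CharP F p]
    (W : Type*) [AddCommGroup W] [Module F W] [FiniteDimensional F W]
    [DistribMulAction G W] [SMulCommClass G F W]
    (V : Submodule F W) (a : ℕ) (ha : Module.finrank F V = a)
    (hVinv : ∀ h : H, ∀ w ∈ V, (h : G) • w ∈ V)
    (Tr : Set G) (hTr : Subgroup.IsComplement Tr (H : Set G))
    (hspan : (⨆ t : Tr, V.map (DistribMulAction.toLinearMap F W (t : G))) = ⊤)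
    (hindep : iSupIndep fun t : Tr => V.map (DistribMulAction.toLinearMap F W (t : G)))
    (T : Subgroup G) (hTsol : IsSolvable T)
    (S : Submodule F W) (hSinv : ∀ (g : G), ∀ w ∈ S, g • w ∈ S) :
    ∃ X : Set W, X ⊆ S ∧
      X.ncard ≤ a * ∑ᶠ ω : MulAction.orbitRel.Quotient T (G ⧸ H),
        p ^ ((Nat.card (MulAction.orbitRel.Quotient.orbit ω)).factorization p) ∧
      invariantSpan G F X = S := by
  classical
  obtain ⟨Q, hQT, hpQ, hcount⟩ := orbit_count_lemma' p hp T hTsol (G ⧸ H)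
  -- coset representatives inside the transversal
  have hrep : ∀ x : G ⧸ H, ∃ t : G, t ∈ Tr ∧ (QuotientGroup.mk t : G ⧸ H) = x := by
    intro x
    obtain ⟨⟨t, h⟩, hth⟩ := hTr.2 (Quotient.out x)
    have hth' : (t : G) * (h : G) = Quotient.out x := hth
    refine ⟨(t : G), t.2, ?_⟩
    have h1 : QuotientGroup.mk ((t : G) * (h : G)) = (QuotientGroup.mk (t : G) : G ⧸ H) :=
      QuotientGroup.mk_mul_of_mem (t : G) h.2
    rw [← h1, hth']
    exact QuotientGroup.out_eq' x
  choose τ hτTr hτmk using hrep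
  -- the averaging projection onto S
  obtain ⟨CC, hCC⟩ := Submodule.exists_isCompl S
  set π₀ : W →ₗ[F] W := S.subtype.comp (Submodule.linearProjOfIsCompl S CC hCC) with hπ₀def
  have hπ₀S : ∀ w : W, π₀ w ∈ S := fun w => (Submodule.linearProjOfIsCompl S CC hCC w).2
  have hπ₀id : ∀ w ∈ S, π₀ w = w := by
    intro w hw
    show (S.subtype) (Submodule.linearProjOfIsCompl S CC hCC w) = w
    rw [show w = ((⟨w, hw⟩ : S) : W) from rfl]
    exact congrArg S.subtype (Submodule.linearProjOfIsCompl_apply_left hCC ⟨w, hw⟩)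
  haveI : Fintype Q := Fintype.ofFinite _
  set act : G → W →ₗ[F] W := fun g => DistribMulAction.toLinearMap F W g with hactdef
  set π : W →ₗ[F] W :=
    (Nat.card Q : F)⁻¹ • ∑ q : Q, (act ((q : G))⁻¹).comp (π₀.comp (act (q : G))) with hπdef
  have hπapp : ∀ w : W, π w = (Nat.card Q : F)⁻¹ •
      ∑ q : Q, ((q : G))⁻¹ • π₀ ((q : G) • w) := by
    intro w
    rw [hπdef]
    simp only [LinearMap.smul_apply, LinearMap.sum_apply, LinearMap.comp_apply]
    rfl
  have hcard0 : (Nat.card Q : F) ≠ 0 := by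
    intro h
    exact hpQ ((CharP.cast_eq_zero_iff F p (Nat.card Q)).mp h)
  have hπS : ∀ w : W, π w ∈ S := by
    intro w
    rw [hπapp]
    refine S.smul_mem _ (Submodule.sum_mem S fun q _ => ?_)
    exact hSinv _ _ (hπ₀S _)
  have hπid : ∀ w ∈ S, π w = w := by
    intro w hw
    rw [hπapp]
    have h2 : ∀ q : Q, ((q : G))⁻¹ • π₀ ((q : G) • w) = w := by
      intro q
      rw [hπ₀id _ (hSinv _ _ hw), inv_smul_smul]
    rw [Finset.sum_congr rfl (fun q _ => h2 q), Finset.sum_const, Finset.card_univ,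
      ← Nat.card_eq_fintype_card, ← Nat.cast_smul_eq_nsmul F, smul_smul,
      inv_mul_cancel₀ hcard0, one_smul]
  have hπcomm : ∀ (q₀ : Q) (w : W), π ((q₀ : G) • w) = (q₀ : G) • π w := by
    intro q₀ w
    rw [hπapp, hπapp]
    rw [smul_comm ((q₀ : G)) ((Nat.card Q : F)⁻¹)]
    congr 1
    rw [Finset.smul_sum]
    refine Fintype.sum_equiv (Equiv.mulRight q₀) _ _ fun q => ?_
    show ((q : G))⁻¹ • π₀ ((q : G) • (q₀ : G) • w)
        = (q₀ : G) • (((q * q₀ : Q) : G))⁻¹ • π₀ (((q * q₀ : Q) : G) • w)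
    have hcoe : ((q * q₀ : Q) : G) = (q : G) * (q₀ : G) := rfl
    rw [hcoe, ← mul_smul (q : G) (q₀ : G) w, smul_smul ((q₀ : G)) ((q : G) * (q₀ : G))⁻¹]
    congr 1
    group
  -- basis of V
  set b := Module.finBasisOfFinrankEq F V ha with hbdef
  set f : MulAction.orbitRel.Quotient Q (G ⧸ H) × Fin a → W :=
    fun ci => τ (Quotient.out ci.1) • ((b ci.2 : V) : W) with hfdef
  set X : Set W := Set.range (⇑π ∘ f) with hXdef
  have hXS : X ⊆ (S : Set W) := by
    rintro _ ⟨ci, rfl⟩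
    exact hπS _
  set M := invariantSpan G F X with hMdef
  have hXM : X ⊆ (M : Set W) := subset_invariantSpan X
  have hMS : M ≤ S := invariantSpan_le X hXS hSinv
  -- key claim
  have claimA : ∀ g : G, ∀ v ∈ V, π (g • v) ∈ M := by
    intro g v hv
    set x : G ⧸ H := QuotientGroup.mk g with hxdef
    set c := (Quotient.mk'' x : MulAction.orbitRel.Quotient Q (G ⧸ H)) with hcdef
    have hxc : x ∈ MulAction.orbitRel.Quotient.orbit c := MulAction.orbitRel.Quotient.mem_orbit.mpr rfl
    rw [MulAction.orbitRel.Quotient.orbit_eq_orbit_out c Quotient.out_eq'] at hxc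
    obtain ⟨q, hq⟩ := MulAction.mem_orbit_iff.mp hxc
    set r := τ (Quotient.out c) with hrdef
    have hrH : (QuotientGroup.mk r : G ⧸ H) = Quotient.out c := hτmk _
    have hq' : (q : G) • (Quotient.out c) = x := hq
    have hsm : (q : G) • (QuotientGroup.mk r : G ⧸ H) = QuotientGroup.mk ((q : G) * r) :=
      MulAction.Quotient.smul_mk H (q : G) r
    have hx2 : (QuotientGroup.mk ((q : G) * r) : G ⧸ H) = QuotientGroup.mk g := by
      rw [← hsm, hrH, hq']
    have hh0 : ((q : G) * r)⁻¹ * g ∈ H := QuotientGroup.eq.mp hx2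
    set h₀ : G := ((q : G) * r)⁻¹ * g with hh0def
    have hgfact : g = ((q : G) * r) * h₀ := by rw [hh0def]; group
    have hv' : h₀ • v ∈ V := hVinv ⟨h₀, hh0⟩ v hv
    have hgv : g • v = (q : G) • (r • (h₀ • v)) := by
      rw [hgfact, mul_smul, mul_smul]
    rw [hgv, hπcomm q]
    apply smul_mem_invariantSpan
    set v' : V := ⟨h₀ • v, hv'⟩ with hv'def
    have hexp : (v' : W) = ∑ j : Fin a, (b.repr v' j) • ((b j : V) : W) := by
      conv_lhs => rw [← b.sum_repr v']
      rw [Submodule.coe_sum]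
      exact Finset.sum_congr rfl fun j _ => rfl
    have hrv : r • (v' : W) = ∑ j : Fin a, (b.repr v' j) • (r • ((b j : V) : W)) := by
      rw [hexp, Finset.smul_sum]
      exact Finset.sum_congr rfl fun j _ => smul_comm r _ _
    show π (r • (v' : W)) ∈ M
    rw [hrv, map_sum]
    refine Submodule.sum_mem M fun j _ => ?_
    rw [map_smul]
    refine Submodule.smul_mem M _ ?_
    exact hXM ⟨(c, j), rfl⟩
  -- every π w lies in M
  have hπW : ∀ w : W, π w ∈ M := by
    intro w
    have hP : (⊤ : Submodule F W) ≤ M.comap π := by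
      rw [← hspan]
      refine iSup_le fun t => ?_
      rintro w' ⟨v, hv, rfl⟩
      exact claimA (t : G) v hv
    exact hP Submodule.mem_top
  have hSM : S ≤ M := by
    intro s hs
    have := hπW s
    rwa [hπid s hs] at this
  refine ⟨X, hXS, ?_, le_antisymm hMS hSM⟩
  -- cardinality bound
  haveI : Fintype (MulAction.orbitRel.Quotient Q (G ⧸ H)) := Fintype.ofFinite _
  have h1 : X.ncard ≤ Nat.card (MulAction.orbitRel.Quotient Q (G ⧸ H) × Fin a) := by
    rw [hXdef, ← Set.image_univ]
    calc ((⇑π ∘ f) '' Set.univ).ncard ≤ (Set.univ : Set _).ncard :=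
          Set.ncard_image_le Set.finite_univ
      _ = Nat.card _ := Set.ncard_univ _
  rw [Nat.card_prod, Nat.card_eq_fintype_card (α := Fin a), Fintype.card_fin] at h1
  calc X.ncard ≤ Nat.card (MulAction.orbitRel.Quotient Q (G ⧸ H)) * a := h1
    _ ≤ (∑ᶠ ω : MulAction.orbitRel.Quotient T (G ⧸ H),
          p ^ ((Nat.card (MulAction.orbitRel.Quotient.orbit ω)).factorization p)) * a :=
        Nat.mul_le_mul_right a hcount
    _ = a * ∑ᶠ ω : MulAction.orbitRel.Quotient T (G ⧸ H),
          p ^ ((Nat.card (MulAction.orbitRel.Quotient.orbit ω)).factorization p) := mul_comm _ _
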